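/- Let A and B be finite nonempty types, let e₀ and e₁ be the standard basis vectors of ℂ^A at two distinct elements 0 and 1 of A, and let U be a unitary matrix in Matrix.unitaryGroup (A × B) ℂ. For b ∈ {0,1} and φ : B → ℂ write ψ_b(φ) = U.mulVec (e_b ⊗ φ). If there is NO unitary matrix S ∈ Matrix.unitaryGroup A ℂ such that (S ⊗ I).mulVec (ψ₀ φ) = ψ₁ φ holds for every φ : B → ℂ, then there exists a vector φ : B → ℂ with ptrA (ψ₀ φ) ≠ ptrA (ψ₁ φ). (A perfectly binding non-static quantum bit commitment cannot be perfectly concealing: for some receiver state φ the receiver's reduced density matrix depends on the committed bit.) -/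

import Mathlib

open scoped ComplexOrder
open Matrix

noncomputable section

/-- Partial trace over `A` of the outer product `|ψ⟩⟨ψ|`:
`(ptrA ψ) j q = ∑ i, ψ (i, j) * conj (ψ (i, q))`. -/
def ptrA {A B : Type*} [Fintype A] (ψ : A × B → ℂ) : Matrix B B ℂ :=
  fun j q => ∑ i : A, ψ (i, j) * (starRingEnd ℂ) (ψ (i, q))

/-- The Kronecker product `S ⊗ I` with the identity on `B`, as a matrix on `A × B`. -/
def kronId {A B : Type*} [DecidableEq B] (S : Matrix A A ℂ) : Matrix (A × B) (A × B) ℂ :=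
  Matrix.kroneckerMap (· * ·) S (1 : Matrix B B ℂ)

/-- `ptrA ψ` is a Gram matrix, hence positive semidefinite. -/
lemma ptrA_posSemidef {A B : Type*} [Fintype A] [Fintype B] (ψ : A × B → ℂ) :
    (ptrA ψ).PosSemidef := by
  set V : Matrix A B ℂ := Matrix.of fun i j => (starRingEnd ℂ) (ψ (i, j)) with hV
  have h := Matrix.posSemidef_conjTranspose_mul_self V
  have heq : ptrA ψ = Vᴴ * V := by
    ext j q
    simp [Matrix.mul_apply, Matrix.conjTranspose_apply, ptrA, hV, mul_comm]
  rw [heq]; exact h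

/-- The square root of a positive semidefinite matrix, as Mathlib defined it in December 2024. -/
def Matrix.PosSemidef.sqrt {n 𝕜 : Type*} [Fintype n] [DecidableEq n] [RCLike 𝕜]
    {A : Matrix n n 𝕜} (hA : A.PosSemidef) : Matrix n n 𝕜 :=
  (hA.1.eigenvectorUnitary : Matrix n n 𝕜) *
    diagonal ((↑) ∘ Real.sqrt ∘ hA.1.eigenvalues) * (star (hA.1.eigenvectorUnitary : Matrix n n 𝕜))

lemma Matrix.PosSemidef.posSemidef_sqrt {n 𝕜 : Type*} [Fintype n] [DecidableEq n] [RCLike 𝕜]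
    {A : Matrix n n 𝕜} (hA : A.PosSemidef) : hA.sqrt.PosSemidef := by
  rw [Matrix.PosSemidef.sqrt, Matrix.star_eq_conjTranspose]
  apply Matrix.PosSemidef.mul_mul_conjTranspose_same
  refine Matrix.posSemidef_diagonal_iff.mpr fun i => ?_
  exact RCLike.ofReal_nonneg.mpr (Real.sqrt_nonneg _)

lemma sqrt_mul_mul_sqrt_posSemidef {B : Type*} [Fintype B] [DecidableEq B]
    {ρ σ : Matrix B B ℂ} (hρ : ρ.PosSemidef) (hσ : σ.PosSemidef) :
    (hρ.sqrt * σ * hρ.sqrt).PosSemidef := by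
  have h := hσ.mul_mul_conjTranspose_same hρ.sqrt
  rwa [hρ.posSemidef_sqrt.isHermitian.eq] at h

/-- The fidelity `F(ρ, σ) = tr √(√ρ * σ * √ρ)` of two positive semidefinite matrices. -/
def fidelity {B : Type*} [Fintype B] [DecidableEq B] {ρ σ : Matrix B B ℂ}
    (hρ : ρ.PosSemidef) (hσ : σ.PosSemidef) : ℝ :=
  ((sqrt_mul_mul_sqrt_posSemidef hρ hσ).sqrt.trace).re

lemma polarization_aux {V : Type*} [AddCommGroup V] [Module ℂ V] (H : V → V → ℂ)
    (hadd1 : ∀ x y z, H (x + y) z = H x z + H y z)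
    (hadd2 : ∀ x y z, H x (y + z) = H x y + H x z)
    (hsmul1 : ∀ (c : ℂ) x y, H (c • x) y = c * H x y)
    (hsmul2 : ∀ (c : ℂ) x y, H x (c • y) = (starRingEnd ℂ) c * H x y)
    (hdiag : ∀ x, H x x = 0) (x y : V) : H x y = 0 := by
  have h1 : H x y + H y x = 0 := by
    have := hdiag (x + y)
    rw [hadd1, hadd2, hadd2, hdiag, hdiag] at this
    linear_combination this
  have h2 : -Complex.I * H x y + Complex.I * H y x = 0 := by
    have := hdiag (x + Complex.I • y)
    simp only [hadd1, hadd2, hsmul1, hsmul2, hdiag, Complex.conj_I] at this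
    linear_combination this
  have hb : H y x = -H x y := by linear_combination h1
  rw [hb] at h2
  have h3 : Complex.I * H x y = 0 := by linear_combination (-1/2 : ℂ) * h2
  exact (mul_eq_zero.mp h3).resolve_left Complex.I_ne_zero

def tensorMul {A B : Type*} [Fintype A] [Fintype B] (M : Matrix (A × B) (A × B) ℂ)
    (e : A → ℂ) : (B → ℂ) →ₗ[ℂ] (A × B → ℂ) where
  toFun φ := M.mulVec (fun p => e p.1 * φ p.2)
  map_add' x y := by
    have h : (fun p : A × B => e p.1 * (x + y) p.2)
        = (fun p => e p.1 * x p.2) + fun p => e p.1 * y p.2 := by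
      funext p; simp [mul_add]
    simp only [h, Matrix.mulVec_add]
  map_smul' c x := by
    have h : (fun p : A × B => e p.1 * (c • x) p.2)
        = c • fun p => e p.1 * x p.2 := by
      funext p; simp only [Pi.smul_apply, smul_eq_mul]; ring
    simp only [h, Matrix.mulVec_smul, RingHom.id_apply]

lemma tensor_expand {A B : Type*} [Fintype A] [Fintype B] [DecidableEq B]
    (T : (B → ℂ) →ₗ[ℂ] (A × B → ℂ)) (φ : B → ℂ) (x : A) (j : B) :
    T φ (x, j) = ∑ k, φ k * T (Pi.single k 1) (x, j) := by
  have hφ : φ = ∑ k, φ k • (Pi.single k 1 : B → ℂ) := by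
    funext r
    simp [Finset.sum_apply, Pi.single_apply]
  conv_lhs => rw [hφ]
  rw [map_sum]
  simp [Finset.sum_apply]

lemma eucl_sum_apply {ι κ : Type*} [Fintype κ] (g : κ → EuclideanSpace ℂ ι) (i : ι) :
    (∑ k, g k) i = ∑ k, g k i := by
  have h := _root_.map_sum (WithLp.linearEquiv 2 ℂ (ι → ℂ)) g Finset.univ
  calc (∑ k, g k) i = (∑ k, (WithLp.linearEquiv 2 ℂ (ι → ℂ)) (g k)) i := congrFun h i
    _ = ∑ k, g k i := Finset.sum_apply i Finset.univ _

set_option maxHeartbeats 2000000 in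
/-- A perfectly binding non-static QBC cannot be perfectly concealing: if no fixed local
unitary `S` on `A` works for every receiver state `φ`, then for some `φ` the receiver's
reduced density matrix depends on the committed bit. -/
theorem nonstatic_binding_not_concealing
    {A B : Type*} [Fintype A] [Fintype B] [DecidableEq A] [DecidableEq B]
    [Nonempty A] [Nonempty B]
    (z o : A) (hzo : z ≠ o)
    (e₀ e₁ : A → ℂ)
    (he₀ : e₀ = fun i => if i = z then 1 else 0)
    (he₁ : e₁ = fun i => if i = o then 1 else 0)
    (U : Matrix.unitaryGroup (A × B) ℂ)
    (ψ₀ ψ₁ : (B → ℂ) → (A × B → ℂ))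
    (hψ₀ : ∀ φ : B → ℂ, ψ₀ φ = (U : Matrix (A × B) (A × B) ℂ).mulVec (fun p => e₀ p.1 * φ p.2))
    (hψ₁ : ∀ φ : B → ℂ, ψ₁ φ = (U : Matrix (A × B) (A × B) ℂ).mulVec (fun p => e₁ p.1 * φ p.2))
    (hbinding : ¬ ∃ S ∈ Matrix.unitaryGroup A ℂ,
      ∀ φ : B → ℂ, (kronId S).mulVec (ψ₀ φ) = ψ₁ φ) :
    ∃ φ : B → ℂ, ptrA (ψ₀ φ) ≠ ptrA (ψ₁ φ) := by
  classical
  by_contra hcon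
  push_neg at hcon
  apply hbinding
  set T₀ : (B → ℂ) →ₗ[ℂ] (A × B → ℂ) := tensorMul (U : Matrix (A × B) (A × B) ℂ) e₀ with hT₀def
  set T₁ : (B → ℂ) →ₗ[ℂ] (A × B → ℂ) := tensorMul (U : Matrix (A × B) (A × B) ℂ) e₁ with hT₁def
  have hT₀ : ∀ φ, ψ₀ φ = T₀ φ := fun φ => hψ₀ φ
  have hT₁ : ∀ φ, ψ₁ φ = T₁ φ := fun φ => hψ₁ φ
  -- full sesquilinear Gram equality by polarization
  have hG : ∀ (x y : B → ℂ) (j q : B),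
      (∑ i, T₀ x (i, j) * (starRingEnd ℂ) (T₀ y (i, q)))
        = ∑ i, T₁ x (i, j) * (starRingEnd ℂ) (T₁ y (i, q)) := by
    intro x y j q
    have hpol := polarization_aux
      (fun x y => (∑ i, T₀ x (i, j) * (starRingEnd ℂ) (T₀ y (i, q)))
        - ∑ i, T₁ x (i, j) * (starRingEnd ℂ) (T₁ y (i, q)))
      (fun a b d => by
        simp only [_root_.map_add, Pi.add_apply, add_mul, Finset.sum_add_distrib]; ring)
      (fun a b d => by
        simp only [_root_.map_add, Pi.add_apply, _root_.map_add, mul_add, Finset.sum_add_distrib]; ring)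
      (fun c a b => by
        simp only [_root_.map_smul, Pi.smul_apply, smul_eq_mul]
        rw [mul_sub, Finset.mul_sum, Finset.mul_sum]
        congr 1 <;> exact Finset.sum_congr rfl fun i _ => by ring)
      (fun c a b => by
        simp only [_root_.map_smul, Pi.smul_apply, smul_eq_mul, _root_.map_mul]
        rw [mul_sub, Finset.mul_sum, Finset.mul_sum]
        congr 1 <;> exact Finset.sum_congr rfl fun i _ => by ring)
      (fun φ => by
        have h := congrFun (congrFun (hcon φ) j) q
        rw [hT₀, hT₁] at h
        simpa [ptrA, sub_eq_zero] using h)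
      x y
    linear_combination hpol
  -- the two families of column vectors, as matrices
  set W₀ : Matrix A (B × B) ℂ := Matrix.of fun i m => T₀ (Pi.single m.2 1) (i, m.1) with hW₀
  set W₁ : Matrix A (B × B) ℂ := Matrix.of fun i m => T₁ (Pi.single m.2 1) (i, m.1) with hW₁
  have hGram : ∀ m m' : B × B,
      (∑ i, (starRingEnd ℂ) (W₀ i m) * W₀ i m') = ∑ i, (starRingEnd ℂ) (W₁ i m) * W₁ i m' := by
    intro m m'
    have h := hG (Pi.single m.2 1) (Pi.single m'.2 1) m.1 m'.1
    have h' := congrArg (starRingEnd ℂ) h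
    simpa only [_root_.map_sum, _root_.map_mul, Complex.conj_conj, hW₀, hW₁, Matrix.of_apply,
      mul_comm] using h'
  -- linear maps into Euclidean space
  set Φ := (WithLp.linearEquiv 2 ℂ (A → ℂ)).symm with hΦ
  set P₀ : ((B × B) → ℂ) →ₗ[ℂ] EuclideanSpace ℂ A := Φ.toLinearMap ∘ₗ W₀.mulVecLin with hP₀
  set P₁ : ((B × B) → ℂ) →ₗ[ℂ] EuclideanSpace ℂ A := Φ.toLinearMap ∘ₗ W₁.mulVecLin with hP₁
  have hinner : ∀ (W : Matrix A (B × B) ℂ) (c : (B × B) → ℂ),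
      (inner ℂ (Φ (W.mulVec c)) (Φ (W.mulVec c)) : ℂ)
        = ∑ m, ∑ m', (starRingEnd ℂ) (c m) * c m' * ∑ i, (starRingEnd ℂ) (W i m) * W i m' := by
    intro W c
    rw [PiLp.inner_apply]
    have h0 : ∀ i, (inner ℂ ((Φ (W.mulVec c)) i) ((Φ (W.mulVec c)) i) : ℂ)
        = (starRingEnd ℂ) (W.mulVec c i) * (W.mulVec c i) := fun i => RCLike.inner_apply' _ _
    have expand : ∀ i, (starRingEnd ℂ) (W.mulVec c i) * (W.mulVec c i)
        = ∑ m, ∑ m', ((starRingEnd ℂ) (W i m) * (starRingEnd ℂ) (c m)) * (W i m' * c m') := by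
      intro i
      rw [Matrix.mulVec, dotProduct, _root_.map_sum, Finset.sum_mul_sum]
      simp only [_root_.map_mul]
    simp only [h0, expand]
    rw [Finset.sum_comm]
    refine Finset.sum_congr rfl fun m _ => ?_
    rw [Finset.sum_comm]
    refine Finset.sum_congr rfl fun m' _ => ?_
    rw [Finset.mul_sum]
    exact Finset.sum_congr rfl fun i _ => by ring
  have hnormsq : ∀ c, (inner ℂ (P₀ c) (P₀ c) : ℂ) = inner ℂ (P₁ c) (P₁ c) := by
    intro c
    show (inner ℂ (Φ (W₀.mulVec c)) (Φ (W₀.mulVec c)) : ℂ) = inner ℂ (Φ (W₁.mulVec c)) (Φ (W₁.mulVec c))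
    rw [hinner, hinner]
    exact Finset.sum_congr rfl fun m _ => Finset.sum_congr rfl fun m' _ => by rw [hGram]
  have hker : LinearMap.ker P₀ ≤ LinearMap.ker P₁ := by
    intro c hc
    rw [LinearMap.mem_ker] at hc ⊢
    have h0 : (inner ℂ (P₁ c) (P₁ c) : ℂ) = 0 := by
      rw [← hnormsq, hc]; simp
    exact inner_self_eq_zero.mp h0
  set f : LinearMap.range P₀ →ₗ[ℂ] EuclideanSpace ℂ A :=
    ((LinearMap.ker P₀).liftQ P₁ hker).comp (P₀.quotKerEquivRange.symm.toLinearMap) with hfdef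
  have hf : ∀ c, f ⟨P₀ c, LinearMap.mem_range_self P₀ c⟩ = P₁ c := by
    intro c
    simp only [hfdef, LinearMap.comp_apply, LinearEquiv.coe_coe]
    rw [LinearMap.quotKerEquivRange_symm_apply_image, Submodule.mkQ_apply,
      Submodule.liftQ_apply]
  have hnorm : ∀ v : LinearMap.range P₀, ‖f v‖ = ‖v‖ := by
    rintro ⟨v, c, rfl⟩
    have h1 : f ⟨P₀ c, ⟨c, rfl⟩⟩ = P₁ c := hf c
    rw [h1]
    have h3 : ‖P₀ c‖ ^ 2 = ‖P₁ c‖ ^ 2 := by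
      rw [← inner_self_eq_norm_sq (𝕜 := ℂ), ← inner_self_eq_norm_sq (𝕜 := ℂ), hnormsq c]
    have h4 : ‖P₀ c‖ = ‖P₁ c‖ := by
      nlinarith [norm_nonneg (P₀ c), norm_nonneg (P₁ c)]
    rw [← h4]
    rfl
  set L : LinearMap.range P₀ →ₗᵢ[ℂ] EuclideanSpace ℂ A := ⟨f, hnorm⟩ with hL
  set Lext := L.extend with hLext
  have hLP : ∀ c, Lext (P₀ c) = P₁ c := by
    intro c
    have : (P₀ c : EuclideanSpace ℂ A)
        = ((⟨P₀ c, LinearMap.mem_range_self P₀ c⟩ : LinearMap.range P₀) : EuclideanSpace ℂ A) :=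
      rfl
    rw [this, L.extend_apply]
    exact hf c
  set S : Matrix A A ℂ := Matrix.of fun i x => Lext (EuclideanSpace.single x 1) i with hS
  have hSmul : ∀ v : EuclideanSpace ℂ A, S.mulVec (fun i => v i) = fun i => Lext v i := by
    intro v
    have hv : v = ∑ x, v x • EuclideanSpace.single x (1 : ℂ) := by
      have h := (EuclideanSpace.basisFun A ℂ).sum_repr v
      simp only [EuclideanSpace.basisFun_apply, EuclideanSpace.basisFun_repr] at h
      exact h.symm
    funext i
    conv_rhs => rw [hv]
    rw [_root_.map_sum]
    rw [eucl_sum_apply]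
    simp only [Matrix.mulVec, dotProduct, LinearIsometry.map_smul, PiLp.smul_apply,
      smul_eq_mul, hS, Matrix.of_apply]
    exact Finset.sum_congr rfl fun x _ => by ring
  have hSU : S ∈ Matrix.unitaryGroup A ℂ := by
    rw [Matrix.mem_unitaryGroup_iff']
    ext x y
    have h := Lext.inner_map_map (EuclideanSpace.single x (1 : ℂ)) (EuclideanSpace.single y 1)
    rw [PiLp.inner_apply, EuclideanSpace.inner_single_left, EuclideanSpace.single_apply,
      _root_.map_one, one_mul] at h
    rw [Matrix.mul_apply, Matrix.one_apply]
    calc ∑ i, (star S) x i * S i y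
        = ∑ i, (inner ℂ ((Lext (EuclideanSpace.single x (1:ℂ))) i)
            ((Lext (EuclideanSpace.single y (1:ℂ))) i) : ℂ) :=
          Finset.sum_congr rfl fun i _ => (RCLike.inner_apply' _ _).symm
      _ = if x = y then 1 else 0 := h
  refine ⟨S, hSU, fun φ => ?_⟩
  funext p
  obtain ⟨i, j⟩ := p
  rw [hT₀, hT₁]
  set c : (B × B) → ℂ := fun m => if m.1 = j then φ m.2 else 0 with hc
  have hcol0 : (fun x => T₀ φ (x, j)) = W₀.mulVec c := by
    funext x
    rw [tensor_expand]
    simp only [Matrix.mulVec, dotProduct, hc, hW₀, Matrix.of_apply]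
    rw [Fintype.sum_prod_type]
    simp [Finset.sum_ite_eq, mul_comm]
  have hcol1 : (fun x => T₁ φ (x, j)) = W₁.mulVec c := by
    funext x
    rw [tensor_expand]
    simp only [Matrix.mulVec, dotProduct, hc, hW₁, Matrix.of_apply]
    rw [Fintype.sum_prod_type]
    simp [Finset.sum_ite_eq, mul_comm]
  have hkron : (kronId S).mulVec (T₀ φ) (i, j) = ∑ x, S i x * T₀ φ (x, j) := by
    simp only [kronId, Matrix.mulVec, dotProduct, Matrix.kroneckerMap_apply,
      Matrix.one_apply, Fintype.sum_prod_type, mul_ite, ite_mul, mul_one, mul_zero,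
      zero_mul, one_mul, Finset.sum_ite_eq]
    simp
  show (kronId S).mulVec (T₀ φ) (i, j) = T₁ φ (i, j)
  rw [hkron]
  have key : S.mulVec (W₀.mulVec c) = fun x => Lext (Φ (W₀.mulVec c)) x := hSmul (Φ (W₀.mulVec c))
  have hPc : Lext (Φ (W₀.mulVec c)) = P₁ c := hLP c
  calc (∑ x, S i x * T₀ φ (x, j)) = S.mulVec (W₀.mulVec c) i := by
        rw [← hcol0]; simp [Matrix.mulVec, dotProduct]
    _ = Lext (Φ (W₀.mulVec c)) i := by rw [key]
    _ = (P₁ c) i := by rw [hPc]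
    _ = W₁.mulVec c i := rfl
    _ = T₁ φ (i, j) := by rw [← hcol1]
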